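/- Correctness of the vertex-cover-to-DAGREACH gadget: given a graph G on n vertices and integer k, construct the DAG consisting of (1) a fixed path from s to t₁ whose yield is 1^k 0^{n−k} #, (2) a fixed path from t₁ to t₂ whose yield encodes the adjacency matrix of G followed by #, and (3) a sequence of n diamond gadgets from t₂ to t, where the i-th diamond offers two parallel paths with yields '1#' and '0#' respectively. Then G has a vertex cover of size at most k if and only if some directed path from s to t has yield in the language A of the previous statement. -/

import Mathlib

inductive LabReaches {V α : Type*} (E : V → α → V → Prop) : V → List α → V → Prop
  | nil (v : V) : LabReaches E v [] v
  | cons {u v w : V} {a : α} {l : List α} :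
      E u a v → LabReaches E v l w → LabReaches E u (a :: l) w

inductive Sym3 : Type
  | zero | one | sep
deriving DecidableEq

def bitSym : Bool → Sym3
  | false => Sym3.zero
  | true => Sym3.one

def matEnc (n : ℕ) (adj : Fin n → Fin n → Bool) : List Sym3 :=
  (List.finRange n).flatMap fun i =>
    (List.finRange n).filterMap fun j => if i < j then some (bitSym (adj i j)) else none

def enc (n k : ℕ) (adj : Fin n → Fin n → Bool) (b : Fin n → Bool) : List Sym3 :=
  List.replicate k Sym3.one ++ List.replicate (n - k) Sym3.zero ++ [Sym3.sep] ++
    matEnc n adj ++ [Sym3.sep] ++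
    (List.finRange n).flatMap (fun i => [bitSym (b i), Sym3.sep])

/-- The vertex-cover verification language `A`. -/
def A : Set (List Sym3) :=
  {w | ∃ (n k : ℕ) (adj : Fin n → Fin n → Bool) (b : Fin n → Bool),
    w = enc n k adj b ∧
    (Finset.univ.filter fun i => b i = true).card ≤ k ∧
    ∀ i j, adj i j = true → b i = true ∨ b j = true}

/-- The fixed prefix `1^k 0^{n-k} # m #` of the gadget. -/
def prefixStr (n k : ℕ) (adj : Fin n → Fin n → Bool) : List Sym3 :=
  List.replicate k Sym3.one ++ List.replicate (n - k) Sym3.zero ++ [Sym3.sep] ++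
    matEnc n adj ++ [Sym3.sep]

/-- The gadget DAG: a fixed path spelling the prefix `p` on vertices
`inl 0, …, inl p.length`, followed by `n` diamond gadgets; the `j`-th diamond goes from
`inl (p.length + j)` to `inl (p.length + j + 1)` and offers two internally disjoint paths,
through `inr (j,true)` with yield `1#` and through `inr (j,false)` with yield `0#`. -/
def gadgetE (p : List Sym3) (n : ℕ) :
    (ℕ ⊕ (ℕ × Bool)) → Sym3 → (ℕ ⊕ (ℕ × Bool)) → Prop := fun x a y =>
  (∃ i, i < p.length ∧ x = Sum.inl i ∧ y = Sum.inl (i + 1) ∧ p[i]? = some a) ∨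
  (∃ j c, j < n ∧ x = Sum.inl (p.length + j) ∧ y = Sum.inr (j, c) ∧ a = bitSym c) ∨
  (∃ j c, j < n ∧ x = Sum.inr (j, c) ∧ y = Sum.inl (p.length + j + 1) ∧ a = Sym3.sep)


def Dsuf (n : ℕ) (bb : ℕ → Bool) (j : ℕ) : List Sym3 :=
  (List.range' j (n - j)).flatMap fun i => [bitSym (bb i), Sym3.sep]

theorem Dsuf_cons {n j : ℕ} (bb : ℕ → Bool) (hj : j < n) :
    Dsuf n bb j = bitSym (bb j) :: Sym3.sep :: Dsuf n bb (j + 1) := by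
  unfold Dsuf
  rw [show n - j = (n - (j + 1)) + 1 by omega, List.range'_succ]
  simp

theorem Dsuf_nil (n : ℕ) (bb : ℕ → Bool) : Dsuf n bb n = [] := by
  unfold Dsuf; rw [Nat.sub_self]; rfl

theorem reach_prefix (p : List Sym3) (n : ℕ) :
    ∀ d i, p.length - i = d → i ≤ p.length →
      LabReaches (gadgetE p n) (Sum.inl i) (p.drop i) (Sum.inl p.length)
  | 0, i, hd, hi => by
      have hi' : i = p.length := by omega
      subst hi'
      rw [List.drop_length]
      exact LabReaches.nil _
  | d + 1, i, hd, hi => by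
      have hip : i < p.length := by omega
      rw [List.drop_eq_getElem_cons hip]
      exact LabReaches.cons
        (Or.inl ⟨i, hip, rfl, rfl, by
          rw [List.getElem?_eq_getElem hip]⟩)
        (reach_prefix p n d (i + 1) (by omega) (by omega))

theorem reach_diamonds (p : List Sym3) (n : ℕ) (bb : ℕ → Bool) :
    ∀ d j, n - j = d → j ≤ n →
      LabReaches (gadgetE p n) (Sum.inl (p.length + j)) (Dsuf n bb j)
        (Sum.inl (p.length + n))
  | 0, j, hd, hj => by
      have hj' : j = n := by omega
      subst hj'
      rw [Dsuf_nil]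
      exact LabReaches.nil _
  | d + 1, j, hd, hj => by
      have hj' : j < n := by omega
      rw [Dsuf_cons bb hj']
      refine LabReaches.cons (Or.inr (Or.inl ⟨j, bb j, hj', rfl, rfl, rfl⟩))
        (LabReaches.cons (Or.inr (Or.inr ⟨j, bb j, hj', rfl, rfl, rfl⟩)) ?_)
      have h := reach_diamonds p n bb d (j + 1) (by omega) (by omega)
      rwa [← Nat.add_assoc] at h

theorem flatMap_congr' {α β : Type*} {l : List α} {f g : α → List β}
    (h : ∀ x ∈ l, f x = g x) : l.flatMap f = l.flatMap g := by
  induction l with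
  | nil => rfl
  | cons a t ih =>
      simp only [List.flatMap_cons, h a (by simp)]
      rw [ih fun x hx => h x (by simp [hx])]

theorem Dsuf_congr {n j : ℕ} {bb bb' : ℕ → Bool} (h : ∀ m, j ≤ m → bb m = bb' m) :
    Dsuf n bb j = Dsuf n bb' j := by
  unfold Dsuf
  exact flatMap_congr' fun x hx => by rw [h x (List.mem_range'_1.mp hx).1]

theorem shape (p : List Sym3) (n : ℕ) :
    ∀ {v : ℕ ⊕ (ℕ × Bool)} {w : List Sym3} {t : ℕ ⊕ (ℕ × Bool)},
      LabReaches (gadgetE p n) v w t → t = Sum.inl (p.length + n) →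
      ((∀ i, v = Sum.inl i → i ≤ p.length → ∃ bb, w = p.drop i ++ Dsuf n bb 0) ∧
       (∀ j, v = Sum.inl (p.length + j) → j ≤ n → ∃ bb, w = Dsuf n bb j) ∧
       (∀ j c, v = Sum.inr (j, c) → j < n → ∃ bb, w = Sym3.sep :: Dsuf n bb (j + 1))) := by
  intro v w t h
  induction h with
  | nil v =>
      rintro rfl
      refine ⟨?_, ?_, ?_⟩
      · intro i hvi hi
        have hni := Sum.inl.inj hvi
        have h1 : n = 0 := by omega
        have h2 : i = p.length := by omega
        subst h1
        rw [h2, List.drop_length]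
        exact ⟨fun _ => false, by rw [Dsuf_nil]; rfl⟩
      · intro j hj hjn
        have hjj : j = n := by
          have := Sum.inl.inj hj; omega
        exact ⟨fun _ => false, by rw [hjj, Dsuf_nil]⟩
      · rintro j c h -
        exact absurd h (by simp)
  | @cons u v' t' a l e hrest ih =>
      intro ht
      obtain ⟨ih1, ih2, ih3⟩ := ih ht
      have C2 : ∀ j, u = Sum.inl (p.length + j) → j ≤ n →
          ∃ bb, a :: l = Dsuf n bb j := by
        rintro j rfl hj
        rcases e with ⟨i', hi', he, -, -⟩ | ⟨j', c, hj', he, hy, ha⟩ | ⟨j', c, -, he, -, -⟩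
        · have := Sum.inl.inj he; omega
        · have hjj : j = j' := by
            have := Sum.inl.inj he; omega
          rw [hjj]
          subst hy; subst ha
          obtain ⟨bb, hl⟩ := ih3 j' c rfl hj'
          refine ⟨Function.update bb j' c, ?_⟩
          rw [Dsuf_cons _ hj', Function.update_self, hl]
          congr 2
          exact Dsuf_congr fun m hm => (Function.update_of_ne (by omega) _ _).symm
        · exact absurd he (by simp)
      have C3 : ∀ j c, u = Sum.inr (j, c) → j < n →
          ∃ bb, a :: l = Sym3.sep :: Dsuf n bb (j + 1) := by
        rintro j c rfl hj
        rcases e with ⟨i', -, he, -, -⟩ | ⟨j', c', -, he, -, -⟩ | ⟨j', c', hj', he, hy, ha⟩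
        · exact absurd he (by simp)
        · exact absurd he (by simp)
        · have hjj : j = j' := by
            have := Sum.inr.inj he
            exact congrArg Prod.fst this
          rw [hjj]
          subst hy; subst ha
          obtain ⟨bb, hl⟩ := ih2 (j' + 1) (by rw [Nat.add_assoc]) (by omega)
          exact ⟨bb, by rw [hl]⟩
      refine ⟨?_, C2, C3⟩
      rintro i rfl hi
      rcases Nat.lt_or_ge i p.length with hip | hip
      · rcases e with ⟨i', hi', he, hy, ha⟩ | ⟨j', c, hj', he, -, -⟩ | ⟨j', c, -, he, -, -⟩
        · have hii : i = i' := Sum.inl.inj he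
          rw [hii]
          rw [hii] at hip
          subst hy
          obtain ⟨bb, hl⟩ := ih1 (i' + 1) rfl (by omega)
          refine ⟨bb, ?_⟩
          rw [List.drop_eq_getElem_cons hip, hl]
          have hpa : p[i'] = a := by
            rw [List.getElem?_eq_getElem hip] at ha
            exact Option.some.inj ha
          rw [hpa]; rfl
        · have := Sum.inl.inj he; omega
        · exact absurd he (by simp)
      · have hie : i = p.length := by omega
        rw [hie]
        obtain ⟨bb, hl⟩ := C2 0 (by rw [hie, Nat.add_zero]) (by omega)
        exact ⟨bb, by rw [List.drop_length, hl]; rfl⟩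

theorem LabReaches.append {V α : Type*} {E : V → α → V → Prop} {u v w : V} {l l' : List α}
    (h1 : LabReaches E u l v) (h2 : LabReaches E v l' w) : LabReaches E u (l ++ l') w := by
  induction h1 with
  | nil => simpa
  | cons e _ ih => exact LabReaches.cons e (ih h2)

theorem bitSym_ne_sep (c : Bool) : bitSym c ≠ Sym3.sep := by cases c <;> simp [bitSym]

theorem bitSym_inj {c c' : Bool} (h : bitSym c = bitSym c') : c = c' := by
  cases c <;> cases c' <;> simp_all [bitSym]

theorem Dsuf_len (n : ℕ) (bb : ℕ → Bool) : (Dsuf n bb 0).length = 2 * n := by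
  simp [Dsuf, List.length_flatMap, Function.comp_def, List.map_const', List.sum_replicate,
    Nat.smul_one_eq_cast, mul_comm]

theorem tail_len (n : ℕ) (b : Fin n → Bool) :
    ((List.finRange n).flatMap fun i => [bitSym (b i), Sym3.sep]).length = 2 * n := by
  simp [List.length_flatMap, Function.comp_def, List.map_const', List.sum_replicate, mul_comm]

theorem sep_not_mem_matEnc (n : ℕ) (adj : Fin n → Fin n → Bool) : Sym3.sep ∉ matEnc n adj := by
  intro h
  simp only [matEnc, List.bind_eq_flatMap, List.mem_flatMap, List.mem_filterMap] at h
  obtain ⟨i, -, j, -, hj⟩ := h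
  split at hj
  · exact bitSym_ne_sep _ (Option.some.inj hj)
  · exact absurd hj (by simp)

theorem sep_not_mem_block (k m : ℕ) :
    Sym3.sep ∉ List.replicate k Sym3.one ++ List.replicate m Sym3.zero := by
  simp [List.mem_replicate]

theorem filterMap_if {α β : Type*} (l : List α) (P : α → Prop) [DecidablePred P] (g : α → β) :
    (l.filterMap fun j => if P j then some (g j) else none)
      = (l.filter fun j => decide (P j)).map g := by
  induction l with
  | nil => rfl
  | cons a t ih => by_cases h : P a <;> simp [h, ih]

theorem bind_eq_of_len {α β : Type*} {l : List α} {f g : α → List β}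
    (hlen : ∀ x ∈ l, (f x).length = (g x).length)
    (h : l.flatMap f = l.flatMap g) : ∀ x ∈ l, f x = g x := by
  induction l with
  | nil => simp
  | cons a t ih =>
      simp only [List.flatMap_cons] at h
      obtain ⟨h1, h2⟩ := List.append_inj h (hlen a (by simp))
      intro x hx
      rcases List.mem_cons.mp hx with rfl | hx
      · exact h1
      · exact ih (fun y hy => hlen y (by simp [hy])) h2 x hx

theorem matEnc_inj {n : ℕ} {adj adj2 : Fin n → Fin n → Bool}
    (h : matEnc n adj = matEnc n adj2) : ∀ i j : Fin n, i < j → adj i j = adj2 i j := by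
  intro i j hij
  unfold matEnc at h
  have hrow := bind_eq_of_len (f := fun i => (List.finRange n).filterMap fun j =>
      if i < j then some (bitSym (adj i j)) else none)
    (g := fun i => (List.finRange n).filterMap fun j =>
      if i < j then some (bitSym (adj2 i j)) else none)
    (fun x _ => by
      rw [filterMap_if _ (fun j => x < j), filterMap_if _ (fun j => x < j)]
      simp) h i (List.mem_finRange i)
  rw [filterMap_if _ (fun j' => i < j'), filterMap_if _ (fun j' => i < j')] at hrow
  have := List.map_eq_map_iff.mp hrow j (by simp [hij])
  exact bitSym_inj this

theorem sep_split {α : Type*} {s : α} {u u' r r' : List α} (hu : s ∉ u) (hu' : s ∉ u')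
    (h : u ++ s :: r = u' ++ s :: r') : u = u' ∧ r = r' := by
  induction u generalizing u' with
  | nil =>
      cases u' with
      | nil => simpa using h
      | cons a t =>
          simp only [List.nil_append, List.cons_append, List.cons.injEq] at h
          exact absurd (h.1 ▸ List.mem_cons_self (a := a) (l := t)) hu'
  | cons a t ih =>
      cases u' with
      | nil =>
          simp only [List.nil_append, List.cons_append, List.cons.injEq] at h
          exact absurd (h.1 ▸ List.mem_cons_self (a := a) (l := t)) (h.1 ▸ hu)
      | cons a' t' =>
          simp only [List.cons_append, List.cons.injEq] at h
          obtain ⟨rfl, h2⟩ := h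
          obtain ⟨h3, h4⟩ := ih (fun hx => hu (by simp [hx])) (fun hx => hu' (by simp [hx])) h2
          exact ⟨by rw [h3], h4⟩

theorem tail_eq_Dsuf (n : ℕ) (b : Fin n → Bool) :
    ((List.finRange n).flatMap fun i => [bitSym (b i), Sym3.sep])
      = Dsuf n (fun m => if h : m < n then b ⟨m, h⟩ else false) 0 := by
  unfold Dsuf
  rw [Nat.sub_zero, ← List.range_eq_range', ← (show (List.finRange n).map Fin.val = List.range n from
    List.ext_getElem (by simp) (by simp)), List.flatMap_map]
  exact flatMap_congr' fun i _ => by simp [i.isLt]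

/-- Correctness of the vertex-cover-to-DAGREACH gadget: `G` has a vertex cover of size
at most `k` iff some directed path from `s` to `t` in the gadget DAG has yield in `A`. -/
theorem stmt12 (n k : ℕ) (G : SimpleGraph (Fin n)) [DecidableRel G.Adj] :
    (∃ S : Finset (Fin n), S.card ≤ k ∧ ∀ i j, G.Adj i j → i ∈ S ∨ j ∈ S) ↔
      ∃ w ∈ A, LabReaches (gadgetE (prefixStr n k fun i j => decide (G.Adj i j)) n)
        (Sum.inl 0)
        w
        (Sum.inl ((prefixStr n k fun i j => decide (G.Adj i j)).length + n)) := by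
  set adj : Fin n → Fin n → Bool := fun i j => decide (G.Adj i j) with hadjdef
  set p : List Sym3 := prefixStr n k adj with hpdef
  constructor
  · rintro ⟨S, hScard, hScov⟩
    set b : Fin n → Bool := fun i => decide (i ∈ S) with hbdef
    set bb : ℕ → Bool := fun m => if h : m < n then b ⟨m, h⟩ else false with hbbdef
    refine ⟨enc n k adj b, ⟨n, k, adj, b, rfl, ?_, ?_⟩, ?_⟩
    · have hSeq : (Finset.univ.filter fun i => b i = true) = S := by
        ext x; simp [hbdef]
      rw [hSeq]; exact hScard
    · intro i j hij
      have hG : G.Adj i j := by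
        rw [hadjdef] at hij
        exact of_decide_eq_true hij
      rcases hScov i j hG with hS | hS
      · left; rw [hbdef]; exact decide_eq_true hS
      · right; rw [hbdef]; exact decide_eq_true hS
    · have hdec : enc n k adj b = p ++ Dsuf n bb 0 := by
        rw [hbbdef, ← tail_eq_Dsuf]
        simp [enc, prefixStr, hpdef, List.append_assoc]
      rw [hdec]
      have h1 := reach_prefix p n p.length 0 rfl (Nat.zero_le _)
      rw [List.drop_zero] at h1
      have h2 := reach_diamonds p n bb n 0 rfl (Nat.zero_le _)
      rw [Nat.add_zero] at h2
      exact h1.append h2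
  · rintro ⟨w, ⟨n', k', adj', b', hw, hcard, hcov⟩, hpath⟩
    obtain ⟨bb, hshape⟩ := (shape p n hpath rfl).1 0 rfl (Nat.zero_le _)
    rw [List.drop_zero] at hshape
    have e1 : p ++ Dsuf n bb 0
        = (List.replicate k Sym3.one ++ List.replicate (n - k) Sym3.zero)
            ++ Sym3.sep :: (matEnc n adj ++ Sym3.sep :: Dsuf n bb 0) := by
      simp [hpdef, prefixStr, List.append_assoc]
    have e2 : enc n' k' adj' b'
        = (List.replicate k' Sym3.one ++ List.replicate (n' - k') Sym3.zero)
            ++ Sym3.sep :: (matEnc n' adj'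
                ++ Sym3.sep :: ((List.finRange n').flatMap fun i => [bitSym (b' i), Sym3.sep])) := by
      simp [enc, List.append_assoc]
    have key := (e1.symm.trans (hshape.symm.trans (hw.trans e2)))
    obtain ⟨hblock, hrest⟩ := sep_split (sep_not_mem_block _ _) (sep_not_mem_block _ _) key
    obtain ⟨hmat, htail⟩ := sep_split (sep_not_mem_matEnc _ _) (sep_not_mem_matEnc _ _) hrest
    have hn : n' = n := by
      have hlen := congrArg List.length htail
      rw [Dsuf_len, tail_len] at hlen
      omega
    subst hn
    have hk : k' = k := by
      have hc := congrArg (List.count Sym3.one) hblock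
      simp [List.count_append, List.count_replicate] at hc
      omega
    have hmm := matEnc_inj hmat
    refine ⟨Finset.univ.filter fun i => b' i = true, ?_, ?_⟩
    · rw [← hk]; exact hcard
    · intro i j hGij
      rcases lt_trichotomy i j with hij | hij | hij
      · have hadj : adj' i j = true := by
          rw [← hmm i j hij, hadjdef]
          exact decide_eq_true hGij
        rcases hcov i j hadj with hb | hb
        · left; simp [hb]
        · right; simp [hb]
      · exact absurd (hij ▸ hGij) (G.irrefl)
      · have hadj : adj' j i = true := by
          rw [← hmm j i hij, hadjdef]
          exact decide_eq_true hGij.symm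
        rcases hcov j i hadj with hb | hb
        · right; simp [hb]
        · left; simp [hb]
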